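/- arXiv:0710.3786 — 3 statements merged into one kernel-verified Lean document; each statement's English description precedes it below -/
import Mathlib

section
/- If Δ(α, γ) ≡ 0 (mod 1) implies Δ(γ, β) ≥ 2 for all slopes γ ≠ ±β, then taking γ = β* with α = β + 2β* and Δ(β, β*) = 1 yields a contradiction; hence the filling slope α cannot have type O(1). -/
/-- The determinant (intersection) pairing on ℤ². -/
def intPair (x y : ℤ × ℤ) : ℤ := x.1 * y.2 - x.2 * y.1

/-- If every slope γ ≠ ±β with Δ(α,γ) ≡ 0 (mod 1) satisfies Δ(γ,β) ≥ 2, then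
taking γ = β*, where α = β + 2β* and Δ(β,β*) = 1, gives a contradiction; hence
α cannot be of type O(1). -/
theorem stmt_11 (β βs α : ℤ × ℤ) (hβs : IsCoprime βs.1 βs.2)
    (hpair : |intPair β βs| = 1) (hα : α = β + 2 • βs)
    (H : ∀ γ : ℤ × ℤ, IsCoprime γ.1 γ.2 → γ ≠ β → γ ≠ -β →
      |intPair α γ| % 1 = 0 → 2 ≤ |intPair γ β|) : False := by
  have h1 : βs ≠ β := by
    rintro rfl
    simp [intPair, mul_comm] at hpair
  have h2 : βs ≠ -β := by
    rintro rfl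
    rw [show intPair β (-β) = 0 by simp [intPair]; ring] at hpair
    simp at hpair
  have h3 := H βs hβs h1 h2 (Int.emod_one _)
  have : intPair βs β = -intPair β βs := by simp [intPair]; ring
  rw [this, abs_neg, hpair] at h3
  omega
end

section
/- Let H be the abelian group with generators a₁, b₁, x₁, a₂, b₂, x₂ and relations 2x₁ = a₁ + b₁, 3x₂ = a₂ + b₂, a₁ = a₂, b₁ = b₂, b₁ = a₂ (gluing case (a)). Then H ⊗ Z/3 ≅ Z/3. -/
open TensorProduct

private abbrev Kspan : Submodule ℤ (Fin 6 → ℤ) :=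
  Submodule.span ℤ ({![1, 1, -2, 0, 0, 0], ![0, 0, 0, 1, 1, -3], ![1, 0, 0, -1, 0, 0],
    ![0, 1, 0, 0, -1, 0], ![0, 1, 0, -1, 0, 0]} : Set (Fin 6 → ℤ))

private abbrev Mq := (Fin 6 → ℤ) ⧸ Kspan

private def phi : (Fin 6 → ℤ) →ₗ[ℤ] ZMod 3 :=
  ((Int.castRingHom (ZMod 3)).toAddMonoidHom.toIntLinearMap).comp (LinearMap.proj 5)

private lemma span_le_ker : Kspan ≤ LinearMap.ker phi := by
  rw [Submodule.span_le]
  rintro r (rfl | rfl | rfl | rfl | rfl) <;> simp [phi] <;> decide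

private def phibar : Mq →ₗ[ℤ] ZMod 3 := Kspan.liftQ phi span_le_ker

private noncomputable def Tmap (c : ZMod 3) : (Fin 6 → ℤ) →ₗ[ℤ] Mq ⊗[ℤ] ZMod 3 :=
  ((TensorProduct.mk ℤ Mq (ZMod 3)).flip c).comp Kspan.mkQ

private lemma Tmap_apply (c : ZMod 3) (v : Fin 6 → ℤ) :
    Tmap c v = (Submodule.Quotient.mk v : Mq) ⊗ₜ[ℤ] c := rfl

private lemma Tmap_rel (c : ZMod 3) (r : Fin 6 → ℤ) (hr : r ∈ Kspan) : Tmap c r = 0 := by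
  rw [Tmap_apply, (Submodule.Quotient.mk_eq_zero _).mpr hr, TensorProduct.zero_tmul]

private lemma three_smul (c : ZMod 3) (v : Fin 6 → ℤ) : (3 : ℤ) • Tmap c v = 0 := by
  rw [Tmap_apply, ← TensorProduct.tmul_smul]
  have : (3 : ℤ) • c = 0 := by
    have h3 : ((3 : ℤ) : ZMod 3) = 0 := by decide
    rw [zsmul_eq_mul, h3, zero_mul]
  rw [this, TensorProduct.tmul_zero]
private lemma smul23 {G : Type*} [AddCommGroup G] (x : G) (h2 : (2:ℤ) • x = 0)
    (h3 : (3:ℤ) • x = 0) : x = 0 := by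
  have : ((3:ℤ) - 2) • x = 0 := by rw [sub_smul, h2, h3, sub_zero]
  simpa using this

private lemma t_vanish (c : ZMod 3) :
    Tmap c (Pi.single 0 1) = 0 ∧ Tmap c (Pi.single 1 1) = 0 ∧ Tmap c (Pi.single 2 1) = 0 ∧
    Tmap c (Pi.single 3 1) = 0 ∧ Tmap c (Pi.single 4 1) = 0 := by
  set t0 := Tmap c (Pi.single 0 1)
  set t1 := Tmap c (Pi.single 1 1)
  set t2 := Tmap c (Pi.single 2 1)
  set t3 := Tmap c (Pi.single 3 1)
  set t4 := Tmap c (Pi.single 4 1)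
  set t5 := Tmap c (Pi.single 5 1)
  have d1 : (![1, 1, -2, 0, 0, 0] : Fin 6 → ℤ) =
      Pi.single 0 1 + Pi.single 1 1 - (2:ℤ) • Pi.single 2 1 := by decide
  have d2 : (![0, 0, 0, 1, 1, -3] : Fin 6 → ℤ) =
      Pi.single 3 1 + Pi.single 4 1 - (3:ℤ) • Pi.single 5 1 := by decide
  have d3 : (![1, 0, 0, -1, 0, 0] : Fin 6 → ℤ) = Pi.single 0 1 - Pi.single 3 1 := by decide
  have d4 : (![0, 1, 0, 0, -1, 0] : Fin 6 → ℤ) = Pi.single 1 1 - Pi.single 4 1 := by decide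
  have d5 : (![0, 1, 0, -1, 0, 0] : Fin 6 → ℤ) = Pi.single 1 1 - Pi.single 3 1 := by decide
  have h1 : t0 + t1 - (2:ℤ) • t2 = 0 := by
    have := Tmap_rel c _ (Submodule.subset_span (show ![1,1,-2,0,0,0] ∈ _ by simp))
    rwa [d1, map_sub, map_add, map_smul] at this
  have h2 : t3 + t4 - (3:ℤ) • t5 = 0 := by
    have := Tmap_rel c _ (Submodule.subset_span (show ![0,0,0,1,1,-3] ∈ _ by simp))
    rwa [d2, map_sub, map_add, map_smul] at this
  have h3 : t0 = t3 := by
    have := Tmap_rel c _ (Submodule.subset_span (show ![1,0,0,-1,0,0] ∈ _ by simp))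
    rw [d3, map_sub] at this; exact sub_eq_zero.mp this
  have h4 : t1 = t4 := by
    have := Tmap_rel c _ (Submodule.subset_span (show ![0,1,0,0,-1,0] ∈ _ by simp))
    rw [d4, map_sub] at this; exact sub_eq_zero.mp this
  have h5 : t1 = t3 := by
    have := Tmap_rel c _ (Submodule.subset_span (show ![0,1,0,-1,0,0] ∈ _ by simp))
    rw [d5, map_sub] at this; exact sub_eq_zero.mp this
  have h2' : t3 + t4 = 0 := by
    rwa [three_smul, sub_zero] at h2
  have ht3 : t3 = 0 := by
    refine smul23 t3 ?_ (three_smul c _)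
    rw [two_smul]
    calc t3 + t3 = t3 + t4 := by rw [← h4, h5]
    _ = 0 := h2'
  have ht0 : t0 = 0 := by rw [h3, ht3]
  have ht1 : t1 = 0 := by rw [h5, ht3]
  have ht4 : t4 = 0 := by rw [← h4, ht1]
  have ht2 : t2 = 0 := by
    refine smul23 t2 ?_ (three_smul c _)
    have : (2:ℤ) • t2 = t0 + t1 - (t0 + t1 - (2:ℤ) • t2) := by abel
    rw [this, h1, sub_zero, ht0, ht1, add_zero]
  exact ⟨ht0, ht1, ht2, ht3, ht4⟩

private lemma single_decomp (v : Fin 6 → ℤ) :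
    v = v 0 • Pi.single 0 1 + v 1 • Pi.single 1 1 + v 2 • Pi.single 2 1 +
      v 3 • Pi.single 3 1 + v 4 • Pi.single 4 1 + v 5 • Pi.single 5 1 := by
  funext i
  fin_cases i <;> simp [Pi.single_apply]

private noncomputable def fmap : Mq ⊗[ℤ] ZMod 3 →ₗ[ℤ] ZMod 3 :=
  TensorProduct.lift ((LinearMap.mul ℤ (ZMod 3)).comp phibar)

private lemma fmap_tmul (v : Fin 6 → ℤ) (c : ZMod 3) :
    fmap ((Submodule.Quotient.mk v : Mq) ⊗ₜ[ℤ] c) = (v 5 : ZMod 3) * c := by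
  exact TensorProduct.lift.tmul _ _

private lemma left_key (v : Fin 6 → ℤ) (c : ZMod 3) :
    (Submodule.Quotient.mk (Pi.single 5 1) : Mq) ⊗ₜ[ℤ] ((v 5 : ZMod 3) * c)
      = (Submodule.Quotient.mk v : Mq) ⊗ₜ[ℤ] c := by
  obtain ⟨h0, h1, h2, h3, h4⟩ := t_vanish c
  have hT : Tmap c v = v 5 • Tmap c (Pi.single 5 1) := by
    conv_lhs => rw [single_decomp v]
    rw [map_add, map_add, map_add, map_add, map_add,
      map_smul, map_smul, map_smul, map_smul, map_smul, map_smul,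
      h0, h1, h2, h3, h4]
    simp only [smul_zero, zero_add, add_zero]
  have hc : ((v 5 : ZMod 3)) * c = (v 5 : ℤ) • c := by rw [zsmul_eq_mul]
  rw [hc, TensorProduct.tmul_smul]
  show (v 5 : ℤ) • Tmap c (Pi.single 5 1) = Tmap c v
  rw [hT]

/-- The abelian group H = ⟨a₁,b₁,x₁,a₂,b₂,x₂ | 2x₁ = a₁+b₁, 3x₂ = a₂+b₂,
a₁ = a₂, b₁ = b₂, b₁ = a₂⟩ (gluing case (a)) satisfies H ⊗ ℤ/3 ≅ ℤ/3.
Generators indexed a₁=0, b₁=1, x₁=2, a₂=3, b₂=4, x₂=5. -/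
theorem stmt_18 :
    Nonempty ((((Fin 6 → ℤ) ⧸ Submodule.span ℤ
      ({![1, 1, -2, 0, 0, 0], ![0, 0, 0, 1, 1, -3], ![1, 0, 0, -1, 0, 0],
        ![0, 1, 0, 0, -1, 0], ![0, 1, 0, -1, 0, 0]} : Set (Fin 6 → ℤ)))
      ⊗[ℤ] (ZMod 3)) ≃+ ZMod 3) := by
  refine ⟨{ toFun := fmap,
            invFun := fun c => (Submodule.Quotient.mk (Pi.single 5 1) : Mq) ⊗ₜ[ℤ] c,
            left_inv := ?_, right_inv := ?_, map_add' := fmap.map_add }⟩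
  · intro t
    show (Submodule.Quotient.mk (Pi.single 5 1) : Mq) ⊗ₜ[ℤ] fmap t = t
    induction t using TensorProduct.induction_on with
    | zero => simp
    | tmul m c =>
        obtain ⟨v, rfl⟩ := Submodule.Quotient.mk_surjective _ m
        rw [fmap_tmul, left_key]
    | add x y hx hy => rw [map_add, TensorProduct.tmul_add, hx, hy]
  · intro c
    show fmap ((Submodule.Quotient.mk (Pi.single 5 1) : Mq) ⊗ₜ[ℤ] c) = c
    rw [fmap_tmul]
    norm_num
end

section
/- Let H be the abelian group with generators a₁, b₁, x₁, a₂, b₂, x₂ and relations 2x₁ = a₁ + b₁, 3x₂ = a₂ + b₂, a₁ = a₂, b₁ = -b₂, b₁ = a₂ (gluing case (d)). Then H ⊗ Z/3 ≅ Z/3 ⊕ Z/3, and hence H is not isomorphic to Z ⊕ Z/2. -/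
open TensorProduct

namespace Stmt19Aux

abbrev S : Submodule ℤ (Fin 6 → ℤ) := Submodule.span ℤ
  ({![1, 1, -2, 0, 0, 0], ![0, 0, 0, 1, 1, -3], ![1, 0, 0, -1, 0, 0],
    ![0, 1, 0, 0, 1, 0], ![0, 1, 0, -1, 0, 0]} : Set (Fin 6 → ℤ))

abbrev H := (Fin 6 → ℤ) ⧸ S

def ψ : (Fin 6 → ℤ) →ₗ[ℤ] ZMod 3 × ZMod 3 where
  toFun v := (((v 0 + v 1 + v 2 + v 3 - v 4 : ℤ) : ZMod 3), ((v 5 : ℤ) : ZMod 3))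
  map_add' v w := by
    simp only [Pi.add_apply, Prod.mk_add_mk, Prod.mk.injEq]
    constructor <;> push_cast <;> ring
  map_smul' z v := by
    simp only [Pi.smul_apply, smul_eq_mul, RingHom.id_apply, Prod.smul_mk, zsmul_eq_mul,
      Prod.mk.injEq]
    constructor <;> push_cast <;> ring

lemma hker : S ≤ LinearMap.ker ψ := by
  rw [Submodule.span_le]
  intro x hx
  simp only [Set.mem_insert_iff, Set.mem_singleton_iff] at hx
  rcases hx with h|h|h|h|h <;> subst h <;>
    simp [ψ, LinearMap.mem_ker, Prod.ext_iff] <;> decide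

def ψ' : H →ₗ[ℤ] ZMod 3 × ZMod 3 := S.liftQ ψ hker

end Stmt19Aux

namespace Stmt19Aux

lemma cons_val_five {α : Type*} (a b c d e f : α) : ![a,b,c,d,e,f] 5 = f := rfl

def e₀ : Fin 6 → ℤ := ![1,0,0,0,0,0]
def e₂ : Fin 6 → ℤ := ![0,0,1,0,0,0]
def e₅ : Fin 6 → ℤ := ![0,0,0,0,0,1]

def r1 : Fin 6 → ℤ := ![1, 1, -2, 0, 0, 0]
def r2 : Fin 6 → ℤ := ![0, 0, 0, 1, 1, -3]
def r3 : Fin 6 → ℤ := ![1, 0, 0, -1, 0, 0]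
def r4 : Fin 6 → ℤ := ![0, 1, 0, 0, 1, 0]
def r5 : Fin 6 → ℤ := ![0, 1, 0, -1, 0, 0]

lemma hr1 : r1 ∈ S := Submodule.subset_span (by left; rfl)
lemma hr2 : r2 ∈ S := Submodule.subset_span (by right; left; rfl)
lemma hr3 : r3 ∈ S := Submodule.subset_span (by right; right; left; rfl)
lemma hr4 : r4 ∈ S := Submodule.subset_span (by right; right; right; left; rfl)
lemma hr5 : r5 ∈ S := Submodule.subset_span (by right; right; right; right; rfl)

lemma hdecomp (v : Fin 6 → ℤ) :
    v = (v 0 + v 1 + v 2 + v 3 - v 4) • e₀ + v 5 • e₅ + (3 * v 2) • (e₂ - e₀)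
      + (v 1 • (r5 - r3) + v 2 • (r1 + r3 - r5) + (- v 3) • r3
        + v 4 • (r4 + r3 - r5)) := by
  funext i
  fin_cases i <;>
    simp [e₀, e₂, e₅, r1, r2, r3, r4, r5, cons_val_five] <;> ring

lemma hs_mem (v : Fin 6 → ℤ) :
    (v 1 • (r5 - r3) + v 2 • (r1 + r3 - r5) + (- v 3) • r3
        + v 4 • (r4 + r3 - r5)) ∈ S := by
  refine S.add_mem (S.add_mem (S.add_mem ?_ ?_) ?_) ?_ <;>
  · apply S.smul_mem
    first
      | exact S.sub_mem hr5 hr3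
      | exact S.sub_mem (S.add_mem hr1 hr3) hr5
      | exact hr3
      | exact S.sub_mem (S.add_mem hr4 hr3) hr5

end Stmt19Aux

namespace Stmt19Aux

noncomputable def F : (H ⊗[ℤ] ZMod 3) →ₗ[ℤ] ZMod 3 × ZMod 3 :=
  TensorProduct.lift (LinearMap.mk₂ ℤ (fun h c => c • ψ' h)
    (fun h h' c => by rw [map_add, smul_add])
    (fun z h c => by rw [map_smul, smul_comm])
    (fun h c c' => by rw [add_smul])
    (fun z h c => by rw [smul_assoc]))

@[simp] lemma F_tmul (h : H) (c : ZMod 3) : F (h ⊗ₜ c) = c • ψ' h := rfl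

noncomputable def G : ZMod 3 × ZMod 3 →+ H ⊗[ℤ] ZMod 3 where
  toFun p := Submodule.Quotient.mk e₀ ⊗ₜ p.1 + Submodule.Quotient.mk e₅ ⊗ₜ p.2
  map_zero' := by simp
  map_add' p q := by
    simp only [Prod.fst_add, Prod.snd_add, tmul_add]
    abel

lemma three_smul (z : ℤ) (c : ZMod 3) : (3 * z) • c = 0 := by
  rw [zsmul_eq_mul]
  push_cast
  rw [show (3 : ZMod 3) = 0 by decide]
  ring

lemma key (v : Fin 6 → ℤ) (c : ZMod 3) :
    (Submodule.Quotient.mk v : H) ⊗ₜ[ℤ] c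
      = Submodule.Quotient.mk e₀ ⊗ₜ ((v 0 + v 1 + v 2 + v 3 - v 4) • c)
        + Submodule.Quotient.mk e₅ ⊗ₜ (v 5 • c) := by
  conv_lhs => rw [hdecomp v]
  rw [Submodule.Quotient.mk_add, Submodule.Quotient.mk_add,
    Submodule.Quotient.mk_add, Submodule.Quotient.mk_smul,
    Submodule.Quotient.mk_smul, Submodule.Quotient.mk_smul,
    (Submodule.Quotient.mk_eq_zero S).2 (hs_mem v), add_zero,
    add_tmul, add_tmul, smul_tmul, smul_tmul, smul_tmul,
    three_smul (v 2) c, tmul_zero, add_zero]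

lemma FG (p : ZMod 3 × ZMod 3) : F (G p) = p := by
  obtain ⟨x, y⟩ := p
  show F (_ + _) = _
  rw [map_add, F_tmul, F_tmul]
  have h0 : ψ' (Submodule.Quotient.mk e₀) = (1, 0) := by
    show ψ e₀ = _
    simp [ψ, e₀, Prod.ext_iff, cons_val_five]
  have h5 : ψ' (Submodule.Quotient.mk e₅) = (0, 1) := by
    show ψ e₅ = _
    simp [ψ, e₅, Prod.ext_iff, cons_val_five]
  rw [h0, h5]
  simp [Prod.ext_iff]

lemma GF (t : H ⊗[ℤ] ZMod 3) : G (F t) = t := by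
  induction t using TensorProduct.induction_on with
  | zero => simp
  | tmul h c =>
    obtain ⟨v, rfl⟩ := Submodule.Quotient.mk_surjective S h
    rw [F_tmul]
    show Submodule.Quotient.mk e₀ ⊗ₜ _ + Submodule.Quotient.mk e₅ ⊗ₜ _ = _
    rw [key v c]
    congr 1
    · congr 1
      show (c • ψ v).1 = _
      simp [ψ, Prod.smul_mk, smul_eq_mul, zsmul_eq_mul]
      ring
    · congr 1
      show (c • ψ v).2 = _
      simp [ψ, Prod.smul_mk, smul_eq_mul, zsmul_eq_mul]
      ring
  | add x y hx hy => rw [map_add, map_add, hx, hy]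

noncomputable def theEquiv : (H ⊗[ℤ] ZMod 3) ≃+ ZMod 3 × ZMod 3 where
  toFun := F
  invFun := G
  left_inv := GF
  right_inv := FG
  map_add' := map_add F

end Stmt19Aux

namespace Stmt19Aux

lemma h5_tor : (3:ℤ) • (Submodule.Quotient.mk e₅ : H) = 0 := by
  rw [← Submodule.Quotient.mk_smul, Submodule.Quotient.mk_eq_zero]
  have h : (3:ℤ) • e₅ = r4 - r5 - r2 := by
    decide
  rw [h]
  exact S.sub_mem (S.sub_mem hr4 hr5) hr2

lemma h5_ne : (Submodule.Quotient.mk e₅ : H) ≠ 0 := by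
  intro h
  have h2 := congrArg ψ' h
  rw [map_zero] at h2
  have h3 : ψ e₅ = 0 := h2
  simp [ψ, e₅, cons_val_five, Prod.ext_iff] at h3

lemma no_iso : ¬ Nonempty (H ≃+ ℤ × ZMod 2) := by
  rintro ⟨f⟩
  have h1 : (3:ℤ) • f (Submodule.Quotient.mk e₅) = 0 := by
    rw [← map_zsmul, h5_tor, map_zero]
  have h2 : f (Submodule.Quotient.mk e₅) = 0 := by
    set p := f (Submodule.Quotient.mk e₅) with hp
    have ha : (3:ℤ) • p.1 = 0 := congrArg Prod.fst h1
    have hb : (3:ℤ) • p.2 = 0 := congrArg Prod.snd h1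
    have ha' : p.1 = 0 := by
      rw [smul_eq_mul] at ha
      omega
    have hb' : p.2 = 0 := by
      rw [zsmul_eq_mul, show ((3:ℤ) : ZMod 2) = 1 by decide, one_mul] at hb
      exact hb
    rw [Prod.ext_iff]
    exact ⟨ha', hb'⟩
  have h3 : (Submodule.Quotient.mk e₅ : H) = 0 := by
    apply f.injective
    rw [h2, map_zero]
  exact h5_ne h3

end Stmt19Aux


/-- The abelian group H = ⟨a₁,b₁,x₁,a₂,b₂,x₂ | 2x₁ = a₁+b₁, 3x₂ = a₂+b₂,
a₁ = a₂, b₁ = -b₂, b₁ = a₂⟩ (gluing case (d)) satisfies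
H ⊗ ℤ/3 ≅ ℤ/3 ⊕ ℤ/3, and hence H is not isomorphic to ℤ ⊕ ℤ/2.
Generators indexed a₁=0, b₁=1, x₁=2, a₂=3, b₂=4, x₂=5. -/
theorem stmt_19 :
    Nonempty ((((Fin 6 → ℤ) ⧸ Submodule.span ℤ
      ({![1, 1, -2, 0, 0, 0], ![0, 0, 0, 1, 1, -3], ![1, 0, 0, -1, 0, 0],
        ![0, 1, 0, 0, 1, 0], ![0, 1, 0, -1, 0, 0]} : Set (Fin 6 → ℤ)))
      ⊗[ℤ] (ZMod 3)) ≃+ (ZMod 3 × ZMod 3)) ∧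
    ¬ Nonempty (((Fin 6 → ℤ) ⧸ Submodule.span ℤ
      ({![1, 1, -2, 0, 0, 0], ![0, 0, 0, 1, 1, -3], ![1, 0, 0, -1, 0, 0],
        ![0, 1, 0, 0, 1, 0], ![0, 1, 0, -1, 0, 0]} : Set (Fin 6 → ℤ)))
      ≃+ (ℤ × ZMod 2)) := by
  exact ⟨⟨Stmt19Aux.theEquiv⟩, Stmt19Aux.no_iso⟩
end
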